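/- An L_Ext-L_Int family of distributions is projective if and only if for every quantifier-free L_Int-query the marginal probability depends only on the L_Ext-type of the parameters. Precisely: (P_D) is projective iff for every quantifier-free L_Int-formula φ(x_1,...,x_m), for any two finite L_Ext-structures D, D' and tuples (a_1,...,a_m) from D, (b_1,...,b_m) from D' that satisfy the same quantifier-free L_Ext-formulas (including equalities), the P_D-probability of φ(a_1,...,a_m) equals the P_{D'}-probability of φ(b_1,...,b_m). -/

import Mathlib

open MeasureTheory

/-- An `L`-structure on domain `D`: an interpretation of each relation symbol `R`
(of arity `ar R`) as a set of `ar R`-tuples from `D`. -/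
def Struc (L : Type) (ar : L → ℕ) (D : Type) : Type :=
  ∀ R : L, (Fin (ar R) → D) → Prop

/-- `ω` (a structure on `D`) extends the image of `X` (a structure on `D'`) along the
injection `ι`; equivalently, `ι` is an embedding of structures from `X` to `ω`. -/
def ExtendsAlong {L : Type} {ar : L → ℕ} {D' D : Type} (ι : D' ↪ D)
    (X : Struc L ar D') (ω : Struc L ar D) : Prop :=
  ∀ (R : L) (s : Fin (ar R) → D'), ω R (fun i => ι (s i)) ↔ X R s

/-- Transport of a structure along a bijection. -/
def Struc.map {L : Type} {ar : L → ℕ} {D D' : Type} (e : D ≃ D')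
    (X : Struc L ar D) : Struc L ar D' :=
  fun R t => X R (fun i => e.symm (t i))

/-- The reduct of a structure to a subvocabulary `E`. -/
def reduct {L : Type} {ar : L → ℕ} (E : Set L) {D : Type} (X : Struc L ar D) :
    Struc ↥E (fun R => ar ↑R) D :=
  fun R t => X ↑R t

/-- A family of distributions indexed by all finite sets is projective if marginals
are invariant under injections. -/
def Projective {L : Type} {ar : L → ℕ}
    (P : ∀ (D : Type) [Fintype D], PMF (Struc L ar D)) : Prop :=
  ∀ (D' D : Type) [Fintype D'] [Fintype D] (ι : D' ↪ D) (X : Struc L ar D'),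
    P D' X = (P D).toOuterMeasure {ω | ExtendsAlong ι X ω}

/-- A structured (`S`-input, `T`-output) family of distributions is projective if
marginals are invariant under embeddings of input structures. -/
def ProjFam {S T : Type} {arS : S → ℕ} {arT : T → ℕ}
    (P : ∀ (D : Type) [Fintype D], Struc S arS D → PMF (Struc T arT D)) : Prop :=
  ∀ (D' D : Type) [Fintype D'] [Fintype D] (ι : D' ↪ D)
    (A' : Struc S arS D') (A : Struc S arS D), ExtendsAlong ι A' A →
    ∀ X : Struc T arT D',
      P D' A' X = (P D A).toOuterMeasure {ω | ExtendsAlong ι X ω}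
/-- Quantifier-free formulas over vocabulary `L` with variables `x_1, ..., x_m`. -/
inductive QF (L : Type) (ar : L → ℕ) (m : ℕ) : Type
  | atom (R : L) (t : Fin (ar R) → Fin m)
  | eq (i j : Fin m)
  | not (φ : QF L ar m)
  | and (φ ψ : QF L ar m)
  | or (φ ψ : QF L ar m)

/-- Satisfaction of a quantifier-free formula in a structure `ω`, with parameters `a`. -/
def QF.Sat {L : Type} {ar : L → ℕ} {m : ℕ} {D : Type}
    (ω : Struc L ar D) (a : Fin m → D) : QF L ar m → Prop
  | .atom R t => ω R (fun i => a (t i))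
  | .eq i j => a i = a j
  | .not φ => ¬ QF.Sat ω a φ
  | .and φ ψ => QF.Sat ω a φ ∧ QF.Sat ω a ψ
  | .or φ ψ => QF.Sat ω a φ ∨ QF.Sat ω a ψ

/-- All relational atoms in the formula have arity at most `k`. -/
def QF.ArityLE {L : Type} {ar : L → ℕ} {m : ℕ} (k : ℕ) : QF L ar m → Prop
  | .atom R _ => ar R ≤ k
  | .eq _ _ => True
  | .not φ => QF.ArityLE k φ
  | .and φ ψ => QF.ArityLE k φ ∧ QF.ArityLE k ψ
  | .or φ ψ => QF.ArityLE k φ ∧ QF.ArityLE k ψ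


section Auxiliary

variable {L : Type} {ar : L → ℕ}

/-- Restriction of a structure along an embedding. -/
def restr {D₀ D : Type} (ι : D₀ ↪ D) (ω : Struc L ar D) : Struc L ar D₀ :=
  fun R s => ω R (fun i => ι (s i))

lemma extendsAlong_iff_restr {D₀ D : Type} (ι : D₀ ↪ D) (X : Struc L ar D₀)
    (ω : Struc L ar D) : ExtendsAlong ι X ω ↔ restr ι ω = X := by
  constructor
  · intro h; funext R s; exact propext (h R s)
  · intro h R s; rw [← h]; exact Iff.rfl

lemma sat_restr {D₀ D : Type} {m : ℕ} (ι : D₀ ↪ D) (ω : Struc L ar D)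
    (a₀ : Fin m → D₀) (φ : QF L ar m) :
    QF.Sat ω (fun i => ι (a₀ i)) φ ↔ QF.Sat (restr ι ω) a₀ φ := by
  induction φ with
  | atom R t => exact Iff.rfl
  | eq i j => simp only [QF.Sat]; exact ι.injective.eq_iff
  | not φ ih => simp only [QF.Sat]; exact not_congr ih
  | and φ ψ ih₁ ih₂ => simp only [QF.Sat]; exact and_congr ih₁ ih₂
  | or φ ψ ih₁ ih₂ => simp only [QF.Sat]; exact or_congr ih₁ ih₂

/-- Conjunction of a list of formulas (with a base formula). -/
def conj {m : ℕ} : List (QF L ar m) → QF L ar m → QF L ar m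
  | [], φ => φ
  | ψ :: l, φ => .and ψ (conj l φ)

lemma sat_conj {D : Type} {m : ℕ} (ω : Struc L ar D) (a : Fin m → D)
    (l : List (QF L ar m)) (φ : QF L ar m) :
    QF.Sat ω a (conj l φ) ↔ (∀ ψ ∈ l, QF.Sat ω a ψ) ∧ QF.Sat ω a φ := by
  induction l with
  | nil => simp [conj]
  | cons ψ l ih => simp only [conj, QF.Sat, ih, List.mem_cons]; constructor
                   · rintro ⟨h1, h2, h3⟩
                     exact ⟨fun χ hχ => hχ.elim (fun e => e ▸ h1) (h2 χ), h3⟩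
                   · rintro ⟨h1, h2⟩
                     exact ⟨h1 ψ (Or.inl rfl), fun χ hχ => h1 χ (Or.inr hχ), h2⟩

lemma fiber_sum {α β : Type} (p : PMF α) (f : α → β) (S : Set β) :
    p.toOuterMeasure (f ⁻¹' S)
      = ∑' b : β, S.indicator (fun b => p.toOuterMeasure (f ⁻¹' {b})) b := by
  classical
  rw [PMF.toOuterMeasure_apply, ← (Equiv.sigmaFiberEquiv f).tsum_eq, ENNReal.tsum_sigma']
  refine tsum_congr fun y => ?_
  by_cases hy : y ∈ S
  · rw [Set.indicator_of_mem hy, PMF.toOuterMeasure_apply, ← tsum_subtype]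
    refine tsum_congr fun x => ?_
    simp only [Equiv.sigmaFiberEquiv]
    exact Set.indicator_of_mem (by simp [x.2, hy]) _
  · rw [Set.indicator_of_notMem hy]
    refine (tsum_congr fun x => ?_).trans tsum_zero
    simp only [Equiv.sigmaFiberEquiv]
    exact Set.indicator_of_notMem (by simp [x.2, hy]) _

end Auxiliary

/-- an `L_Ext`-`L_Int` family of distributions is projective iff the marginal
probability of every quantifier-free `L_Int`-query depends only on the `L_Ext`-type
(the quantifier-free `L_Ext`-formulas with equality satisfied) of its parameters. -/
theorem stmt4 {L : Type} [Fintype L] (ar : L → ℕ) (E : Set L)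
    (P : ∀ (D : Type) [Fintype D],
      Struc ↥E (fun R => ar ↑R) D → PMF (Struc L ar D)) :
    ProjFam P ↔
      ∀ (m : ℕ) (φ : QF L ar m) (D D' : Type) [Fintype D] [Fintype D']
        (A : Struc ↥E (fun R => ar ↑R) D) (A' : Struc ↥E (fun R => ar ↑R) D')
        (a : Fin m → D) (b : Fin m → D'),
        (∀ ψ : QF ↥E (fun R => ar ↑R) m, QF.Sat A a ψ ↔ QF.Sat A' b ψ) →
        (P D A).toOuterMeasure {ω | QF.Sat ω a φ} =
          (P D' A').toOuterMeasure {ω | QF.Sat ω b φ} := by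
  classical
  constructor
  · -- forward direction
    intro hP m φ D D' _ _ A A' a b htype
    haveI : Fintype ↥(Set.range a) := Fintype.ofFinite _
    let ι : ↥(Set.range a) ↪ D := Function.Embedding.subtype _
    have keyeq : ∀ i j : Fin m, a i = a j ↔ b i = b j := fun i j => htype (.eq i j)
    let idx : ↥(Set.range a) → Fin m := fun d => d.2.choose
    have hidx : ∀ d : ↥(Set.range a), a (idx d) = d.1 := fun d => d.2.choose_spec
    have hι'inj : Function.Injective (fun d : ↥(Set.range a) => b (idx d)) := by
      intro d₁ d₂ hdd
      have h1 : a (idx d₁) = a (idx d₂) := (keyeq _ _).2 hdd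
      exact Subtype.ext (by rw [← hidx d₁, ← hidx d₂, h1])
    let ι' : ↥(Set.range a) ↪ D' := ⟨fun d => b (idx d), hι'inj⟩
    let a₀ : Fin m → ↥(Set.range a) := fun i => ⟨a i, ⟨i, rfl⟩⟩
    have hb : ∀ i, ι' (a₀ i) = b i := fun i => (keyeq _ _).1 (hidx (a₀ i))
    let A₀ : Struc ↥E (fun R => ar ↑R) ↥(Set.range a) := restr ι A
    have hExt : ExtendsAlong ι A₀ A := fun R s => Iff.rfl
    have hExt' : ExtendsAlong ι' A₀ A' := by
      intro R s
      have h2 : (fun i => ι (s i)) = fun i => a (idx (s i)) :=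
        funext fun i => (hidx (s i)).symm
      have h3 := htype (QF.atom R (fun i => idx (s i)))
      show A' R (fun i => ι' (s i)) ↔ A R (fun i => ι (s i))
      rw [h2]
      exact h3.symm
    have hset : {ω : Struc L ar D | QF.Sat ω a φ}
        = restr ι ⁻¹' {X₀ | QF.Sat X₀ a₀ φ} := by
      ext ω
      show QF.Sat ω a φ ↔ QF.Sat (restr ι ω) a₀ φ
      exact sat_restr ι ω a₀ φ
    have hset' : {ω : Struc L ar D' | QF.Sat ω b φ}
        = restr ι' ⁻¹' {X₀ | QF.Sat X₀ a₀ φ} := by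
      ext ω
      show QF.Sat ω b φ ↔ QF.Sat (restr ι' ω) a₀ φ
      have hb' : b = fun i => ι' (a₀ i) := funext fun i => (hb i).symm
      rw [show QF.Sat ω b φ = QF.Sat ω (fun i => ι' (a₀ i)) φ from
        congrArg (fun c => QF.Sat ω c φ) hb']
      exact sat_restr ι' ω a₀ φ
    rw [hset, hset', fiber_sum, fiber_sum]
    refine tsum_congr fun X₀ => ?_
    by_cases hX : X₀ ∈ {X₀ | QF.Sat X₀ a₀ φ}
    · rw [Set.indicator_of_mem hX, Set.indicator_of_mem hX]
      have e1 : restr ι ⁻¹' {X₀} = {ω | ExtendsAlong ι X₀ ω} := by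
        ext ω
        simp only [Set.mem_preimage, Set.mem_singleton_iff, Set.mem_setOf_eq,
          extendsAlong_iff_restr]
      have e2 : restr ι' ⁻¹' {X₀} = {ω | ExtendsAlong ι' X₀ ω} := by
        ext ω
        simp only [Set.mem_preimage, Set.mem_singleton_iff, Set.mem_setOf_eq,
          extendsAlong_iff_restr]
      rw [e1, e2, ← hP _ D ι A₀ A hExt X₀, ← hP _ D' ι' A₀ A' hExt' X₀]
    · rw [Set.indicator_of_notMem hX, Set.indicator_of_notMem hX]
  · -- backward direction
    intro h D' D _ _ ι A' A hExt X
    let m := Fintype.card D'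
    let e : Fin m ≃ D' := (Fintype.equivFin D').symm
    by_cases hI : Nonempty (Σ R : L, Fin (ar R) → Fin m)
    · obtain ⟨i₀⟩ := hI
      let lit : (Σ R : L, Fin (ar R) → Fin m) → QF L ar m := fun p =>
        if X p.1 (fun i => e (p.2 i)) then .atom p.1 p.2 else .not (.atom p.1 p.2)
      have sat_lit : ∀ {D'' : Type} (ω : Struc L ar D'') (c : Fin m → D'')
          (p : Σ R : L, Fin (ar R) → Fin m),
          QF.Sat ω c (lit p) ↔
            (ω p.1 (fun i => c (p.2 i)) ↔ X p.1 (fun i => e (p.2 i))) := by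
        intro D'' ω c p
        by_cases hp : X p.1 (fun i => e (p.2 i)) <;> simp [lit, hp, QF.Sat]
      let l := (Finset.univ : Finset (Σ R : L, Fin (ar R) → Fin m)).toList.map lit
      let φ := conj l (lit i₀)
      have satφ : ∀ {D'' : Type} (ω : Struc L ar D'') (c : Fin m → D''),
          QF.Sat ω c φ ↔
            ∀ p : Σ R : L, Fin (ar R) → Fin m,
              (ω p.1 (fun i => c (p.2 i)) ↔ X p.1 (fun i => e (p.2 i))) := by
        intro D'' ω c
        rw [show φ = conj l (lit i₀) from rfl, sat_conj]
        constructor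
        · rintro ⟨h1, _⟩ p
          exact (sat_lit ω c p).1
            (h1 (lit p) (List.mem_map_of_mem (by simp [Finset.mem_toList])))
        · intro hall
          refine ⟨fun ψ hψ => ?_, (sat_lit ω c i₀).2 (hall i₀)⟩
          obtain ⟨p, _, rfl⟩ := List.mem_map.1 hψ
          exact (sat_lit ω c p).2 (hall p)
      have htype : ∀ ψ : QF ↥E (fun R => ar ↑R) m,
          QF.Sat A (fun i => ι (e i)) ψ ↔ QF.Sat A' (fun i => e i) ψ := by
        intro ψ
        have hsr := sat_restr ι A (fun i => e i) ψ
        rw [(extendsAlong_iff_restr ι A' A).1 hExt] at hsr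
        exact hsr
      have hmain := h m φ D D' A A' (fun i => ι (e i)) (fun i => e i) htype
      have e1 : {ω : Struc L ar D | QF.Sat ω (fun i => ι (e i)) φ}
          = {ω | ExtendsAlong ι X ω} := by
        ext ω
        rw [Set.mem_setOf_eq, Set.mem_setOf_eq, satφ]
        constructor
        · intro hall R s
          have hp := hall ⟨R, fun i => e.symm (s i)⟩
          simpa using hp
        · intro hext p
          exact hext p.1 (fun i => e (p.2 i))
      have e2 : {ω : Struc L ar D' | QF.Sat ω (fun i => e i) φ} = {X} := by
        ext ω
        rw [Set.mem_setOf_eq, satφ, Set.mem_singleton_iff]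
        constructor
        · intro hall
          funext R s
          have hp := hall ⟨R, fun i => e.symm (s i)⟩
          simp only [Equiv.apply_symm_apply] at hp
          exact propext hp
        · rintro rfl p
          exact Iff.rfl
      rw [e1, e2, PMF.toOuterMeasure_apply_singleton] at hmain
      exact hmain.symm
    · -- no atoms are possible: structures on D' are trivial
      have habs : ∀ (R : L), (Fin (ar R) → D') → False := by
        intro R s
        exact hI ⟨⟨R, fun i => e.symm (s i)⟩⟩
      haveI : Subsingleton (Struc L ar D') :=
        ⟨fun Y Z => funext fun R => funext fun s => (habs R s).elim⟩
      have hX1 : P D' A' X = 1 := by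
        have h1 := (P D' A').tsum_coe
        rwa [tsum_eq_single X (fun c hc => (hc (Subsingleton.elim c X)).elim)] at h1
      have hset : {ω : Struc L ar D | ExtendsAlong ι X ω} = Set.univ := by
        ext ω
        simp only [Set.mem_setOf_eq, Set.mem_univ, iff_true]
        intro R s
        exact (habs R s).elim
      have huniv : (P D A).toOuterMeasure Set.univ = 1 := by
        rw [PMF.toOuterMeasure_apply]
        simp only [Set.indicator_univ]
        exact (P D A).tsum_coe
      rw [hX1, hset, huniv]
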